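/- arXiv:1709.06413 — 5 statements merged into one kernel-verified Lean document; each statement's English description precedes it below -/
import Mathlib

section
/- Let ρ > 0 and define a_n = (n+1)^{-ρ} for n ≥ 0. Then the sequence (b_n) defined by b_0 = 1 and b_n = -∑_{k=1}^{n} a_k b_{n-k} for n ≥ 1 satisfies |b_n| ≤ (n+1)^{-ρ} for all n ≥ 0. -/
/-- positivity of the sequence a_k = (k+1)^(-ρ) -/
lemma stmt6_apos (ρ : ℝ) (k : ℕ) : 0 < ((k : ℝ) + 1) ^ (-ρ) :=
  Real.rpow_pos_of_pos (by positivity) _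

/-- log-convexity in ratio form: a_k * a_{n-1} ≤ a_{k-1} * a_n for 1 ≤ k ≤ n. -/
lemma stmt6_ratio (ρ : ℝ) (hρ : 0 < ρ) {k n : ℕ} (hk : 1 ≤ k) (hkn : k ≤ n) :
    ((k : ℝ) + 1) ^ (-ρ) * (((n - 1 : ℕ) : ℝ) + 1) ^ (-ρ) ≤
      (((k - 1 : ℕ) : ℝ) + 1) ^ (-ρ) * ((n : ℝ) + 1) ^ (-ρ) := by
  have hn : 1 ≤ n := le_trans hk hkn
  have h1 : (((n - 1 : ℕ) : ℝ) + 1) = (n : ℝ) := by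
    have : ((n - 1 : ℕ) : ℝ) = (n : ℝ) - 1 := by
      push_cast [Nat.cast_sub hn]; ring
    rw [this]; ring
  have h2 : (((k - 1 : ℕ) : ℝ) + 1) = (k : ℝ) := by
    have : ((k - 1 : ℕ) : ℝ) = (k : ℝ) - 1 := by
      push_cast [Nat.cast_sub hk]; ring
    rw [this]; ring
  rw [h1, h2]
  have hkpos : (0 : ℝ) < (k : ℝ) := by exact_mod_cast hk
  have hnpos : (0 : ℝ) < (n : ℝ) := by exact_mod_cast hn
  rw [← Real.mul_rpow (by positivity) (by positivity),
    ← Real.mul_rpow (by positivity) (by positivity)]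
  apply Real.rpow_le_rpow_of_nonpos (by positivity) ?_ (by linarith)
  have : (k : ℝ) ≤ (n : ℝ) := by exact_mod_cast hkn
  nlinarith

/-- Kaluza sign lemma: b n ≤ 0 for n ≥ 1. -/
lemma stmt6_sign (ρ : ℝ) (hρ : 0 < ρ) (b : ℕ → ℝ)
    (hb0 : b 0 = 1)
    (hbn : ∀ n : ℕ, 1 ≤ n →
      b n = -∑ k ∈ Finset.Icc 1 n, ((k : ℝ) + 1) ^ (-ρ) * b (n - k)) :
    ∀ n : ℕ, 1 ≤ n → b n ≤ 0 := by
  set a : ℕ → ℝ := fun k => ((k : ℝ) + 1) ^ (-ρ) with ha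
  intro n
  induction n using Nat.strong_induction_on with
  | _ n IH =>
    intro hn
    rcases eq_or_lt_of_le hn with h1 | h2
    · -- n = 1
      have h := hbn 1 le_rfl
      rw [← h1, h]
      simp only [Finset.Icc_self, Finset.sum_singleton, Nat.sub_self, hb0, mul_one,
        neg_nonpos]
      positivity
    · -- n ≥ 2
      have hn2 : 2 ≤ n := h2
      have hn1 : 1 ≤ n - 1 := by omega
      have hanpos := stmt6_apos ρ (n - 1)
      set r : ℝ := a n / a (n - 1) with hr
      -- split off k = 1 from the main recursion
      have hsplit : ∑ k ∈ Finset.Icc 1 n, a k * b (n - k)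
          = a 1 * b (n - 1) + ∑ k ∈ Finset.Icc 2 n, a k * b (n - k) := by
        rw [show Finset.Icc 2 n = (Finset.Icc 1 n).erase 1 by
          rw [Finset.Icc_erase_left]; exact Finset.Icc_add_one_left_eq_Ioc (a := 1) (b := n)]
        exact (Finset.add_sum_erase _ (fun k => a k * b (n - k))
          (by simp [Finset.mem_Icc]; omega)).symm
      -- reindex the (n-1) recursion
      have hT : ∑ k ∈ Finset.Icc 2 n, a (k - 1) * b (n - k) = -b (n - 1) := by
        have hmap : Finset.Icc 2 n = (Finset.Icc 1 (n - 1)).map (addRightEmbedding 1) := by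
          rw [Finset.map_add_right_Icc]
          congr 1 <;> omega
        rw [hmap, Finset.sum_map]
        have : ∀ k ∈ Finset.Icc 1 (n - 1),
            a (addRightEmbedding 1 k - 1) * b (n - addRightEmbedding 1 k)
              = a k * b (n - 1 - k) := by
          intro k hk
          simp only [addRightEmbedding_apply]
          congr 2 <;> omega
        rw [Finset.sum_congr rfl this]
        have := hbn (n - 1) hn1
        linarith [this]
      have hS := hbn n (by omega)
      -- key identity
      have key : b n = -((a 1 - r) * b (n - 1)
          + ∑ k ∈ Finset.Icc 2 n, (a k - r * a (k - 1)) * b (n - k)) := by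
        have hdist : ∑ k ∈ Finset.Icc 2 n, (a k - r * a (k - 1)) * b (n - k)
            = ∑ k ∈ Finset.Icc 2 n, a k * b (n - k)
              - r * ∑ k ∈ Finset.Icc 2 n, a (k - 1) * b (n - k) := by
          rw [Finset.mul_sum, ← Finset.sum_sub_distrib]
          apply Finset.sum_congr rfl
          intro k _; ring
        rw [hdist, hT, hS, hsplit]
        ring
      rw [key, neg_nonpos]
      have term1 : 0 ≤ (a 1 - r) * b (n - 1) := by
        apply mul_nonneg_of_nonpos_of_nonpos
        · rw [sub_nonpos, hr, le_div_iff₀ hanpos]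
          have := stmt6_ratio ρ hρ (k := 1) (n := n) le_rfl (by omega)
          simpa [ha] using this
        · exact IH (n - 1) (by omega) hn1
      have term2 : ∀ k ∈ Finset.Icc 2 n, 0 ≤ (a k - r * a (k - 1)) * b (n - k) := by
        intro k hk
        simp only [Finset.mem_Icc] at hk
        rcases eq_or_lt_of_le hk.2 with hkn | hkn
        · -- k = n: coefficient is zero
          have : a k - r * a (k - 1) = 0 := by
            rw [hkn, hr, div_mul_eq_mul_div, sub_eq_zero, eq_div_iff (ne_of_gt hanpos)]
          rw [this, zero_mul]
        · apply mul_nonneg_of_nonpos_of_nonpos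
          · rw [sub_nonpos, hr, div_mul_eq_mul_div, le_div_iff₀ hanpos]
            have := stmt6_ratio ρ hρ (k := k) (n := n) (by omega) (le_of_lt hkn)
            calc a k * a (n - 1) ≤ a (k - 1) * a n := this
              _ = a n * a (k - 1) := by ring
          · exact IH (n - k) (by omega) (by omega)
      exact add_nonneg term1 (Finset.sum_nonneg term2)

theorem stmt6 (ρ : ℝ) (hρ : 0 < ρ) (b : ℕ → ℝ)
    (hb0 : b 0 = 1)
    (hbn : ∀ n : ℕ, 1 ≤ n →
      b n = -∑ k ∈ Finset.Icc 1 n, ((k : ℝ) + 1) ^ (-ρ) * b (n - k)) :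
    ∀ n : ℕ, |b n| ≤ ((n : ℝ) + 1) ^ (-ρ) := by
  intro n
  rcases Nat.eq_zero_or_pos n with h0 | hn
  · subst h0
    simp [hb0]
  · have hsign := stmt6_sign ρ hρ b hb0 hbn
    have hbneg : b n ≤ 0 := hsign n hn
    rw [abs_le]
    constructor
    · -- -a n ≤ b n
      have hsplit : ∑ k ∈ Finset.Icc 1 n, ((k : ℝ) + 1) ^ (-ρ) * b (n - k)
          = ((n : ℝ) + 1) ^ (-ρ) * b (n - n)
            + ∑ k ∈ Finset.Icc 1 (n - 1), ((k : ℝ) + 1) ^ (-ρ) * b (n - k) := by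
        rw [show Finset.Icc 1 (n - 1) = (Finset.Icc 1 n).erase n by
          rw [Finset.Icc_erase_right, ← Finset.Ico_add_one_right_eq_Icc]; congr 1; omega]
        exact (Finset.add_sum_erase _ (fun k : ℕ => ((k : ℝ) + 1) ^ (-ρ) * b (n - k))
          (by simp [Finset.mem_Icc]; omega)).symm
      have hrest : ∑ k ∈ Finset.Icc 1 (n - 1), ((k : ℝ) + 1) ^ (-ρ) * b (n - k) ≤ 0 := by
        apply Finset.sum_nonpos
        intro k hk
        simp only [Finset.mem_Icc] at hk
        exact mul_nonpos_of_nonneg_of_nonpos (le_of_lt (stmt6_apos ρ k))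
          (hsign (n - k) (by omega))
      have := hbn n hn
      rw [this, hsplit]
      simp only [Nat.sub_self, hb0, mul_one]
      linarith
    · exact le_trans hbneg (le_of_lt (stmt6_apos ρ n))
end

section
/- Let α, β > 0 with α + β > 1 and (α, β) ∉ ({1} × (0,1]) ∪ ((0,1] × {1}). Then there exists a constant C(α,β) > 0 such that for all n ≥ 0, ∑_{k=0}^{n} (k+1)^{-β} (n+1-k)^{-α} ≤ C(α,β) (n+1)^{-min{α, β, α+β-1}}. -/
open Finset

/-- Key inequality for the case `s ∈ [0,1]`: `s * (a+1)^(s-1) ≤ (a+1)^s - a^s`. -/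
lemma keyLT (s a : ℝ) (hs0 : 0 ≤ s) (hs1 : s ≤ 1) (ha : 0 < a) :
    s * (a + 1) ^ (s - 1) ≤ (a + 1) ^ s - a ^ s := by
  have ha1 : (0:ℝ) < a + 1 := by linarith
  have ht0 : (0:ℝ) ≤ a / (a + 1) := by positivity
  have hgm := Real.geom_mean_le_arith_mean2_weighted hs0 (by linarith : (0:ℝ) ≤ 1 - s)
    ht0 zero_le_one (by ring)
  rw [Real.one_rpow, mul_one, mul_one] at hgm
  -- hgm : (a/(a+1))^s ≤ s * (a/(a+1)) + (1-s)
  have hdiv : (a / (a + 1)) ^ s = a ^ s / (a + 1) ^ s :=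
    Real.div_rpow ha.le ha1.le s
  have hmul := mul_le_mul_of_nonneg_right hgm (Real.rpow_nonneg ha1.le s)
  rw [hdiv, div_mul_cancel₀ _ (by positivity : ((a+1):ℝ) ^ s ≠ 0)] at hmul
  have hsub : (a + 1) ^ (s - 1) = (a + 1) ^ s / (a + 1) := by
    rw [Real.rpow_sub ha1, Real.rpow_one]
  have : (s * (a / (a + 1)) + (1 - s)) * (a + 1) ^ s
      = (a + 1) ^ s - s * ((a+1) ^ s / (a+1)) * (1 - a / (a+1)) * (a+1) / (1 - a/(a+1)) / (a+1) := by
    field_simp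
    ring
  nlinarith [Real.rpow_nonneg ha1.le s, Real.rpow_nonneg ha1.le (s-1),
    hsub, mul_le_mul_of_nonneg_right hgm (Real.rpow_nonneg ha1.le s),
    (by field_simp; ring : (s * (a / (a + 1)) + (1 - s)) * (a + 1) ^ s
      = (a+1)^s - s * ((a+1)^s / (a+1)))]

/-- Key inequality for `s > 0`: `s * (a+1)^(-s-1) ≤ a^(-s) - (a+1)^(-s)`. -/
lemma keyGT (s a : ℝ) (hs : 0 < s) (ha : 0 < a) :
    s * (a + 1) ^ (-s - 1) ≤ a ^ (-s) - (a + 1) ^ (-s) := by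
  have ha1 : (0:ℝ) < a + 1 := by linarith
  have ht0 : (0:ℝ) < a / (a + 1) := by positivity
  have hlog : Real.log (a / (a + 1)) ≤ a / (a + 1) - 1 := Real.log_le_sub_one_of_pos ht0
  have h3 : a / (a + 1) - 1 = -(1 / (a + 1)) := by field_simp; ring
  have hlog2 : Real.log (a / (a + 1)) ≤ -(1 / (a + 1)) := by rw [h3] at hlog; exact hlog
  have h2 : 1 + s / (a + 1) ≤ (a / (a + 1)) ^ (-s) := by
    rw [Real.rpow_def_of_pos ht0]
    have e1 : s / (a + 1) ≤ Real.log (a / (a + 1)) * (-s) :=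
      calc s / (a + 1) = (1 / (a + 1)) * s := by ring
        _ ≤ (-Real.log (a / (a + 1))) * s :=
            mul_le_mul_of_nonneg_right (by linarith) hs.le
        _ = Real.log (a / (a + 1)) * (-s) := by ring
    linarith [Real.add_one_le_exp (Real.log (a / (a + 1)) * (-s))]
  have htpow : (a / (a + 1)) ^ (-s) = a ^ (-s) / (a + 1) ^ (-s) := Real.div_rpow ha.le ha1.le _
  have hpos : (0:ℝ) < (a + 1) ^ (-s) := Real.rpow_pos_of_pos ha1 _
  have hmul := mul_le_mul_of_nonneg_right h2 hpos.le
  rw [htpow, div_mul_cancel₀ _ hpos.ne'] at hmul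
  have hsub : (a + 1) ^ (-s - 1) = (a + 1) ^ (-s) / (a + 1) := by
    rw [Real.rpow_sub ha1, Real.rpow_one]
  calc s * (a + 1) ^ (-s - 1) = s / (a + 1) * (a + 1) ^ (-s) := by rw [hsub]; ring
    _ ≤ a ^ (-s) - (a + 1) ^ (-s) := by nlinarith

/-- Partial sums of `(k+1)^(-β)` for `β < 1`. -/
lemma sumLT (β : ℝ) (hβ0 : 0 < β) (hβ1 : β < 1) (n : ℕ) :
    ∑ k ∈ range (n + 1), ((k : ℝ) + 1) ^ (-β) ≤ ((n : ℝ) + 1) ^ (1 - β) / (1 - β) := by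
  have hs : (0:ℝ) < 1 - β := by linarith
  induction n with
  | zero =>
      norm_num [Real.one_rpow]
      nlinarith [inv_pos.mpr hs, mul_inv_cancel₀ (ne_of_gt hs)]
  | succ n ih =>
      rw [sum_range_succ]
      have hkey := keyLT (1 - β) ((n:ℝ) + 1) (by linarith) (by linarith) (by positivity)
      have hcast : ((n:ℝ) + 1 + 1) = ((n+1:ℕ):ℝ) + 1 := by push_cast; ring
      have hexp : (1 - β) - 1 = -β := by ring
      rw [hexp] at hkey
      have : (((n+1:ℕ):ℝ) + 1) ^ (-β)
          ≤ ((((n+1:ℕ):ℝ) + 1) ^ (1 - β) - (((n:ℕ):ℝ) + 1) ^ (1-β)) / (1 - β) := by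
        rw [le_div_iff₀ hs]
        calc (((n+1:ℕ):ℝ) + 1) ^ (-β) * (1 - β)
            = (1 - β) * (((n:ℝ) + 1) + 1) ^ (-β) := by rw [hcast]; ring
          _ ≤ (((n:ℝ)+1) + 1) ^ (1-β) - ((n:ℝ)+1) ^ (1-β) := hkey
          _ = (((n+1:ℕ):ℝ) + 1) ^ (1 - β) - (((n:ℕ):ℝ) + 1) ^ (1-β) := by rw [hcast]
      have := add_le_add ih this
      calc ∑ k ∈ range (n+1), ((k:ℝ)+1) ^ (-β) + (((n+1:ℕ):ℝ) + 1) ^ (-β)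
          ≤ ((n:ℝ)+1) ^ (1-β)/(1-β)
            + ((((n+1:ℕ):ℝ) + 1) ^ (1 - β) - (((n:ℕ):ℝ) + 1) ^ (1-β)) / (1 - β) := this
        _ = (((n+1:ℕ):ℝ) + 1) ^ (1-β) / (1-β) := by field_simp; ring

/-- Partial sums of `(k+1)^(-β)` for `β > 1`. -/
lemma sumGT (β : ℝ) (hβ : 1 < β) (n : ℕ) :
    ∑ k ∈ range (n + 1), ((k : ℝ) + 1) ^ (-β) ≤ 1 + 1 / (β - 1) := by
  have hs : (0:ℝ) < β - 1 := by linarith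
  have main : ∀ n : ℕ, ∑ k ∈ range (n + 1), ((k : ℝ) + 1) ^ (-β)
      + ((n:ℝ) + 1) ^ (1 - β) / (β - 1) ≤ 1 + 1 / (β - 1) := by
    intro n
    induction n with
    | zero =>
        simp only [range_one, sum_singleton, Nat.cast_zero, zero_add, Real.one_rpow]
        rw [one_div]
    | succ n ih =>
        rw [sum_range_succ]
        have hkey := keyGT (β - 1) ((n:ℝ) + 1) hs (by positivity)
        have hcast : ((n:ℝ) + 1 + 1) = ((n+1:ℕ):ℝ) + 1 := by push_cast; ring
        have e1 : -(β - 1) - 1 = -β := by ring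
        have e2 : -(β - 1) = 1 - β := by ring
        rw [e1, e2] at hkey
        -- hkey : (β-1) * ((n:ℝ)+1+1)^(-β) ≤ ((n:ℝ)+1)^(1-β) - ((n:ℝ)+1+1)^(1-β)
        have step : (((n+1:ℕ):ℝ) + 1) ^ (-β) + (((n+1:ℕ):ℝ) + 1) ^ (1 - β) / (β - 1)
            ≤ (((n:ℕ):ℝ) + 1) ^ (1 - β) / (β - 1) := by
          rw [← hcast]
          have h' : ((n:ℝ) + 1 + 1) ^ (-β)
              ≤ (((n:ℝ) + 1) ^ (1 - β) - ((n:ℝ) + 1 + 1) ^ (1 - β)) / (β - 1) := by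
            rw [le_div_iff₀ hs]; nlinarith
          rw [sub_div] at h'
          linarith
        linarith
  have h := main n
  have : 0 ≤ ((n:ℝ) + 1) ^ (1 - β) / (β - 1) := by positivity
  linarith

/-- Partial sums of `(k+1)^(-1)`. -/
lemma sumEQ (n : ℕ) :
    ∑ k ∈ range (n + 1), ((k : ℝ) + 1) ^ (-(1:ℝ)) ≤ 1 + Real.log ((n : ℝ) + 1) := by
  induction n with
  | zero =>
      simp only [range_one, sum_singleton, Nat.cast_zero, zero_add]
      rw [Real.one_rpow, Real.log_one]; norm_num
  | succ n ih =>
      rw [sum_range_succ]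
      have hpos : (0:ℝ) < (n:ℝ) + 1 := by positivity
      have hpos2 : (0:ℝ) < (n:ℝ) + 2 := by positivity
      have hlog : Real.log (((n:ℝ)+1)/((n:ℝ)+2)) ≤ ((n:ℝ)+1)/((n:ℝ)+2) - 1 :=
        Real.log_le_sub_one_of_pos (by positivity)
      have hld : Real.log (((n:ℝ)+1)/((n:ℝ)+2)) = Real.log ((n:ℝ)+1) - Real.log ((n:ℝ)+2) :=
        Real.log_div hpos.ne' hpos2.ne'
      have hfrac : ((n:ℝ)+1)/((n:ℝ)+2) - 1 = -(1/((n:ℝ)+2)) := by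
        field_simp
        norm_num
      have hstep : (((n+1:ℕ):ℝ) + 1) ^ (-(1:ℝ)) ≤ Real.log (((n+1:ℕ):ℝ)+1) - Real.log ((n:ℝ)+1) := by
        have hc : ((n+1:ℕ):ℝ) + 1 = (n:ℝ) + 2 := by push_cast; ring
        rw [hc, Real.rpow_neg_one]
        rw [hld, hfrac] at hlog
        have : (1:ℝ)/((n:ℝ)+2) ≤ Real.log ((n:ℝ)+2) - Real.log ((n:ℝ)+1) := by linarith
        rw [inv_eq_one_div]; linarith
      linarith

/-- The one-sided estimate: the partial sums of `(k+1)^(-β)` are bounded by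
`D * (n+1)^(α - γ)` where `γ = min (min α β) (α + β - 1)`. -/
lemma lemA (α β : ℝ) (hα : 0 < α) (hβ : 0 < β) (hαβ : 1 < α + β)
    (h2 : ¬(β = 1 ∧ α ≤ 1)) :
    ∃ D > 0, ∀ n : ℕ, ∑ k ∈ range (n + 1), ((k : ℝ) + 1) ^ (-β)
      ≤ D * ((n : ℝ) + 1) ^ (α - min (min α β) (α + β - 1)) := by
  set γ := min (min α β) (α + β - 1) with hγ
  rcases lt_trichotomy β 1 with hb | hb | hb
  · refine ⟨1 / (1 - β), div_pos one_pos (by linarith), fun n => ?_⟩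
    have h1n : (1:ℝ) ≤ (n:ℝ) + 1 := le_add_of_nonneg_left (Nat.cast_nonneg n)
    have he : 1 - β ≤ α - γ := by
      have : γ ≤ α + β - 1 := min_le_right _ _
      linarith
    calc ∑ k ∈ range (n + 1), ((k : ℝ) + 1) ^ (-β)
        ≤ ((n:ℝ) + 1) ^ (1 - β) / (1 - β) := sumLT β hβ hb n
      _ ≤ ((n:ℝ) + 1) ^ (α - γ) / (1 - β) := by
          apply div_le_div_of_nonneg_right _ (by linarith)
          · exact Real.rpow_le_rpow_of_exponent_le h1n he
      _ = 1 / (1 - β) * ((n:ℝ) + 1) ^ (α - γ) := by ring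
  · -- β = 1, so α > 1
    have ha1 : 1 < α := by
      by_contra h
      exact h2 ⟨hb, le_of_not_gt h⟩
    have hγ1 : γ = 1 := by
      rw [hγ, hb]
      rw [min_eq_right ha1.le, min_eq_left (by linarith : (1:ℝ) ≤ α + 1 - 1)]
    refine ⟨1 + 1 / (α - 1), by nlinarith [div_pos one_pos (show (0:ℝ) < α - 1 by linarith)], fun n => ?_⟩
    have h1n : (1:ℝ) ≤ (n:ℝ) + 1 := le_add_of_nonneg_left (Nat.cast_nonneg n)
    have hlog : Real.log ((n:ℝ) + 1) ≤ ((n:ℝ)+1) ^ (α - 1) / (α - 1) :=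
      Real.log_le_rpow_div (by positivity) (by linarith)
    have hone : (1:ℝ) ≤ ((n:ℝ)+1) ^ (α - 1) := Real.one_le_rpow h1n (by linarith)
    have := sumEQ n
    rw [hb, hγ1]
    calc ∑ k ∈ range (n + 1), ((k : ℝ) + 1) ^ (-(1:ℝ))
        ≤ 1 + Real.log ((n:ℝ) + 1) := sumEQ n
      _ ≤ ((n:ℝ)+1) ^ (α - 1) + ((n:ℝ)+1) ^ (α - 1) / (α - 1) := by linarith
      _ = (1 + 1 / (α - 1)) * ((n:ℝ) + 1) ^ (α - 1) := by ring
  · refine ⟨1 + 1 / (β - 1), by nlinarith [div_pos one_pos (show (0:ℝ) < β - 1 by linarith)], fun n => ?_⟩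
    have h1n : (1:ℝ) ≤ (n:ℝ) + 1 := le_add_of_nonneg_left (Nat.cast_nonneg n)
    have hone : (1:ℝ) ≤ ((n:ℝ)+1) ^ (α - γ) := by
      apply Real.one_le_rpow h1n
      have : γ ≤ min α β := min_le_left _ _
      have : γ ≤ α := le_trans this (min_le_left _ _)
      linarith
    calc ∑ k ∈ range (n + 1), ((k : ℝ) + 1) ^ (-β)
        ≤ 1 + 1 / (β - 1) := sumGT β hb n
      _ ≤ (1 + 1 / (β - 1)) * ((n:ℝ) + 1) ^ (α - γ) := by
          nlinarith [one_div_pos.mpr (by linarith : (0:ℝ) < β - 1)]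

theorem stmt8 (α β : ℝ) (hα : 0 < α) (hβ : 0 < β) (hαβ : 1 < α + β)
    (h1 : ¬(α = 1 ∧ β ≤ 1)) (h2 : ¬(β = 1 ∧ α ≤ 1)) :
    ∃ C > 0, ∀ n : ℕ,
      ∑ k ∈ Finset.range (n + 1), ((k : ℝ) + 1) ^ (-β) * ((n : ℝ) + 1 - k) ^ (-α)
        ≤ C * ((n : ℝ) + 1) ^ (-(min (min α β) (α + β - 1))) := by
  set γ := min (min α β) (α + β - 1) with hγ
  obtain ⟨D, hD, hDs⟩ := lemA α β hα hβ hαβ h2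
  obtain ⟨D', hD', hD's⟩ := lemA β α hβ hα (by linarith) h1
  have hγ' : min (min β α) (β + α - 1) = γ := by
    rw [hγ, min_comm β α, add_comm β α]
  rw [hγ'] at hD's
  refine ⟨2 ^ α * D + 2 ^ β * D', by positivity, fun n => ?_⟩
  set m := n / 2 with hm
  have hmn : m + 1 ≤ n + 1 := Nat.succ_le_succ (Nat.div_le_self n 2)
  have hn1 : (0:ℝ) < (n:ℝ) + 1 := by positivity
  have hhalf : (0:ℝ) < ((n:ℝ) + 1) / 2 := by positivity
  -- two pointwise facts
  have hsplit := (Finset.sum_range_add_sum_Ico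
    (fun k => ((k : ℝ) + 1) ^ (-β) * ((n : ℝ) + 1 - k) ^ (-α)) hmn)
  rw [← hsplit]
  -- Part 1 bound
  have part1 : ∑ k ∈ range (m + 1), ((k : ℝ) + 1) ^ (-β) * ((n : ℝ) + 1 - k) ^ (-α)
      ≤ 2 ^ α * D * ((n:ℝ) + 1) ^ (-γ) := by
    have hterm : ∀ k ∈ range (m + 1), ((k : ℝ) + 1) ^ (-β) * ((n : ℝ) + 1 - k) ^ (-α)
        ≤ ((k : ℝ) + 1) ^ (-β) * (2 ^ α * ((n:ℝ) + 1) ^ (-α)) := by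
      intro k hk
      apply mul_le_mul_of_nonneg_left _ (Real.rpow_nonneg (by positivity) _)
      have hk' : k ≤ m := Nat.lt_succ_iff.mp (mem_range.mp hk)
      have hkr : (k:ℝ) ≤ m := Nat.cast_le.mpr hk'
      have hmr : 2 * (m:ℝ) ≤ (n:ℝ) := by
        have : 2 * m ≤ n := by omega
        exact_mod_cast this
      have hge : ((n:ℝ) + 1) / 2 ≤ (n:ℝ) + 1 - k := by linarith
      have := Real.rpow_le_rpow_of_nonpos hhalf hge (by linarith : -α ≤ 0)
      calc ((n:ℝ) + 1 - k) ^ (-α) ≤ (((n:ℝ) + 1) / 2) ^ (-α) := this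
        _ = 2 ^ α * ((n:ℝ) + 1) ^ (-α) := by
            rw [Real.div_rpow (by positivity) (by norm_num), Real.rpow_neg hn1.le,
              Real.rpow_neg (by norm_num : (0:ℝ) ≤ 2)]
            field_simp
    calc ∑ k ∈ range (m + 1), ((k : ℝ) + 1) ^ (-β) * ((n : ℝ) + 1 - k) ^ (-α)
        ≤ ∑ k ∈ range (m + 1), ((k : ℝ) + 1) ^ (-β) * (2 ^ α * ((n:ℝ) + 1) ^ (-α)) :=
          Finset.sum_le_sum hterm
      _ = (∑ k ∈ range (m + 1), ((k : ℝ) + 1) ^ (-β)) * (2 ^ α * ((n:ℝ) + 1) ^ (-α)) := by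
          rw [← Finset.sum_mul]
      _ ≤ (∑ k ∈ range (n + 1), ((k : ℝ) + 1) ^ (-β)) * (2 ^ α * ((n:ℝ) + 1) ^ (-α)) := by
          apply mul_le_mul_of_nonneg_right _ (by positivity)
          apply Finset.sum_le_sum_of_subset_of_nonneg
          · exact Finset.range_subset_range.mpr hmn
          · intro k _ _; positivity
      _ ≤ D * ((n:ℝ) + 1) ^ (α - γ) * (2 ^ α * ((n:ℝ) + 1) ^ (-α)) := by
          apply mul_le_mul_of_nonneg_right (hDs n) (by positivity)
      _ = 2 ^ α * D * (((n:ℝ) + 1) ^ (α - γ) * ((n:ℝ) + 1) ^ (-α)) := by ring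
      _ = 2 ^ α * D * ((n:ℝ) + 1) ^ (-γ) := by
          rw [← Real.rpow_add hn1]; ring_nf
  -- Part 2 bound
  have part2 : ∑ k ∈ Finset.Ico (m + 1) (n + 1), ((k : ℝ) + 1) ^ (-β) * ((n : ℝ) + 1 - k) ^ (-α)
      ≤ 2 ^ β * D' * ((n:ℝ) + 1) ^ (-γ) := by
    have hterm : ∀ k ∈ Finset.Ico (m + 1) (n + 1),
        ((k : ℝ) + 1) ^ (-β) * ((n : ℝ) + 1 - k) ^ (-α)
        ≤ (2 ^ β * ((n:ℝ) + 1) ^ (-β)) * ((n : ℝ) + 1 - k) ^ (-α) := by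
      intro k hk
      obtain ⟨hk1, hk2⟩ := Finset.mem_Ico.mp hk
      have hkn : k ≤ n := Nat.lt_succ_iff.mp hk2
      have hknr : (k:ℝ) ≤ n := Nat.cast_le.mpr hkn
      apply mul_le_mul_of_nonneg_right _ (Real.rpow_nonneg (by linarith) _)
      have hklb : (n:ℝ) ≤ 2 * (k:ℝ) + 1 := by
        have : n ≤ 2 * k + 1 := by omega
        exact_mod_cast this
      have hge : ((n:ℝ) + 1) / 2 ≤ (k:ℝ) + 1 := by linarith
      have := Real.rpow_le_rpow_of_nonpos hhalf hge (by linarith : -β ≤ 0)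
      calc ((k:ℝ) + 1) ^ (-β) ≤ (((n:ℝ) + 1) / 2) ^ (-β) := this
        _ = 2 ^ β * ((n:ℝ) + 1) ^ (-β) := by
            rw [Real.div_rpow (by positivity) (by norm_num), Real.rpow_neg hn1.le,
              Real.rpow_neg (by norm_num : (0:ℝ) ≤ 2)]
            field_simp
    have hreflect : ∑ k ∈ range (n + 1), ((n : ℝ) + 1 - k) ^ (-α)
        = ∑ k ∈ range (n + 1), ((k : ℝ) + 1) ^ (-α) := by
      rw [← Finset.sum_range_reflect (fun k => ((k : ℝ) + 1) ^ (-α)) (n+1)]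
      apply Finset.sum_congr rfl
      intro k hk
      have hkn : k ≤ n := Nat.lt_succ_iff.mp (mem_range.mp hk)
      congr 1
      have : (n + 1 - 1 - k : ℕ) = n - k := by omega
      rw [this]
      rw [Nat.cast_sub hkn]
      ring
    calc ∑ k ∈ Finset.Ico (m + 1) (n + 1), ((k : ℝ) + 1) ^ (-β) * ((n : ℝ) + 1 - k) ^ (-α)
        ≤ ∑ k ∈ Finset.Ico (m + 1) (n + 1),
            (2 ^ β * ((n:ℝ) + 1) ^ (-β)) * ((n : ℝ) + 1 - k) ^ (-α) :=
          Finset.sum_le_sum hterm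
      _ = (2 ^ β * ((n:ℝ) + 1) ^ (-β)) * ∑ k ∈ Finset.Ico (m + 1) (n + 1),
            ((n : ℝ) + 1 - k) ^ (-α) := by rw [← Finset.mul_sum]
      _ ≤ (2 ^ β * ((n:ℝ) + 1) ^ (-β)) * ∑ k ∈ range (n + 1), ((n : ℝ) + 1 - k) ^ (-α) := by
          apply mul_le_mul_of_nonneg_left _ (by positivity)
          apply Finset.sum_le_sum_of_subset_of_nonneg
          · intro k hk
            obtain ⟨_, hk2⟩ := Finset.mem_Ico.mp hk
            exact mem_range.mpr hk2
          · intro k hk _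
            have hkn : k ≤ n := Nat.lt_succ_iff.mp (mem_range.mp hk)
            have : (k:ℝ) ≤ n := Nat.cast_le.mpr hkn
            apply Real.rpow_nonneg; linarith
      _ = (2 ^ β * ((n:ℝ) + 1) ^ (-β)) * ∑ k ∈ range (n + 1), ((k : ℝ) + 1) ^ (-α) := by
          rw [hreflect]
      _ ≤ (2 ^ β * ((n:ℝ) + 1) ^ (-β)) * (D' * ((n:ℝ) + 1) ^ (β - γ)) := by
          apply mul_le_mul_of_nonneg_left (hD's n) (by positivity)
      _ = 2 ^ β * D' * (((n:ℝ) + 1) ^ (-β) * ((n:ℝ) + 1) ^ (β - γ)) := by ring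
      _ = 2 ^ β * D' * ((n:ℝ) + 1) ^ (-γ) := by
          rw [← Real.rpow_add hn1]; ring_nf
  calc _ ≤ 2 ^ α * D * ((n:ℝ) + 1) ^ (-γ) + 2 ^ β * D' * ((n:ℝ) + 1) ^ (-γ) :=
        add_le_add part1 part2
    _ = (2 ^ α * D + 2 ^ β * D') * ((n:ℝ) + 1) ^ (-γ) := by ring
end

section
/- Let α = 1 and 0 < β ≤ 1. Then there exists C > 0 such that for all n ≥ 2, ∑_{k=0}^{n} (k+1)^{-β} (n+1-k)^{-1} ≤ C (n+1)^{-β} log n. -/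
/-- Harmonic sum bound. -/
lemma harm_bound (n : ℕ) :
    ∑ k ∈ Finset.range n, ((k : ℝ) + 1)⁻¹ ≤ 1 + Real.log n := by
  induction n with
  | zero => simp
  | succ n ih =>
    rcases Nat.eq_zero_or_pos n with h0 | hn
    · subst h0; simp
    · rw [Finset.sum_range_succ]
      have hnR : (0:ℝ) < n := by exact_mod_cast hn
      have hx : (0:ℝ) < (n:ℝ) / ((n:ℝ) + 1) := by positivity
      have hlog := Real.log_le_sub_one_of_pos hx
      rw [Real.log_div (ne_of_gt hnR) (by positivity)] at hlog
      have hkey : ((n:ℝ) + 1)⁻¹ ≤ Real.log ((n:ℝ) + 1) - Real.log n := by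
        have h1 : (n:ℝ) / ((n:ℝ) + 1) - 1 = -(((n:ℝ)+1)⁻¹) := by
          field_simp; ring
        rw [h1] at hlog
        linarith
      push_cast at hkey ⊢
      linarith

theorem stmt9 (β : ℝ) (hβ0 : 0 < β) (hβ1 : β ≤ 1) :
    ∃ C > 0, ∀ n : ℕ, 2 ≤ n →
      ∑ k ∈ Finset.range (n + 1), ((k : ℝ) + 1) ^ (-β) * ((n : ℝ) + 1 - k) ^ (-(1 : ℝ))
        ≤ C * ((n : ℝ) + 1) ^ (-β) * Real.log n := by
  refine ⟨16, by norm_num, fun n hn => ?_⟩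
  have hN : (0:ℝ) < (n:ℝ) + 1 := by positivity
  have hNb : (0:ℝ) < ((n:ℝ) + 1) ^ (-β) := Real.rpow_pos_of_pos hN _
  -- pointwise bound
  have point : ∀ k ∈ Finset.range (n+1),
      ((k : ℝ) + 1) ^ (-β) * ((n : ℝ) + 1 - k) ^ (-(1 : ℝ))
        ≤ 2 * ((n:ℝ)+1) ^ (-β) * ((n:ℝ) + 1 - k)⁻¹
          + 2 * ((n:ℝ)+1) ^ (-β) * ((k:ℝ) + 1)⁻¹ := by
    intro k hk
    rw [Finset.mem_range] at hk
    have hkn : (k:ℝ) ≤ n := by exact_mod_cast Nat.lt_succ_iff.mp hk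
    set a : ℝ := (k:ℝ) + 1 with ha_def
    set b : ℝ := (n:ℝ) + 1 - k with hb_def
    have ha : (1:ℝ) ≤ a := by simp [ha_def]
    have hb : (1:ℝ) ≤ b := by simp [hb_def]; linarith
    have ha0 : (0:ℝ) < a := by linarith
    have hb0 : (0:ℝ) < b := by linarith
    rw [Real.rpow_neg_one]
    rcases le_or_gt ((n:ℝ)+1) (2*a) with hcase | hcase
    · -- a large
      have h1 : a ^ (-β) ≤ 2 * ((n:ℝ)+1) ^ (-β) := by
        have h2 : (((n:ℝ)+1)/2) ^ (-β) = ((n:ℝ)+1) ^ (-β) * (2:ℝ) ^ β := by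
          rw [Real.div_rpow hN.le (by norm_num), Real.rpow_neg (by norm_num : (0:ℝ) ≤ 2),
            div_eq_mul_inv, inv_inv]
        have h3 : a ^ (-β) ≤ (((n:ℝ)+1)/2) ^ (-β) :=
          Real.rpow_le_rpow_of_nonpos (by linarith) (by linarith) (by linarith)
        have h4 : (2:ℝ) ^ β ≤ 2 := by
          calc (2:ℝ) ^ β ≤ (2:ℝ) ^ (1:ℝ) :=
                Real.rpow_le_rpow_of_exponent_le (by norm_num) hβ1
            _ = 2 := Real.rpow_one 2
        calc a ^ (-β) ≤ ((n:ℝ)+1) ^ (-β) * (2:ℝ) ^ β := by rw [← h2]; exact h3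
          _ ≤ ((n:ℝ)+1) ^ (-β) * 2 := mul_le_mul_of_nonneg_left h4 hNb.le
          _ = 2 * ((n:ℝ)+1) ^ (-β) := by ring
      have : a ^ (-β) * b⁻¹ ≤ 2 * ((n:ℝ)+1) ^ (-β) * b⁻¹ :=
        mul_le_mul_of_nonneg_right h1 (by positivity)
      have hpos : (0:ℝ) ≤ 2 * ((n:ℝ)+1) ^ (-β) * a⁻¹ := by positivity
      linarith
    · -- b large : 2*b > n+1
      have hbl : (n:ℝ) + 1 < 2 * b := by
        simp only [hb_def]; linarith
      have hbinv : b⁻¹ ≤ 2 * ((n:ℝ)+1)⁻¹ := by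
        rw [inv_le_iff_one_le_mul₀ hb0]
        have : (n:ℝ)+1 ≤ 2 * b := le_of_lt hbl
        calc (1:ℝ) = ((n:ℝ)+1) * ((n:ℝ)+1)⁻¹ := by field_simp
          _ ≤ (2*b) * ((n:ℝ)+1)⁻¹ := by
              apply mul_le_mul_of_nonneg_right this (by positivity)
          _ = 2 * ((n:ℝ)+1)⁻¹ * b := by ring
      have hone : a ^ (-β) ≤ ((n:ℝ)+1) ^ (1-β) * a⁻¹ := by
        have h1 : a ^ (-β) = a ^ (1-β) * a⁻¹ := by
          rw [← Real.rpow_neg_one a, ← Real.rpow_add ha0]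
          congr 1; ring
        rw [h1]
        apply mul_le_mul_of_nonneg_right _ (by positivity)
        exact Real.rpow_le_rpow ha0.le (by simp [ha_def]; linarith) (by linarith)
      have hmul : ((n:ℝ)+1) ^ (1-β) * ((n:ℝ)+1)⁻¹ = ((n:ℝ)+1) ^ (-β) := by
        rw [← Real.rpow_neg_one ((n:ℝ)+1), ← Real.rpow_add hN]
        congr 1; ring
      have : a ^ (-β) * b⁻¹ ≤ (((n:ℝ)+1) ^ (1-β) * a⁻¹) * (2 * ((n:ℝ)+1)⁻¹) := by
        apply mul_le_mul hone hbinv (by positivity) (by positivity)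
      have heq : (((n:ℝ)+1) ^ (1-β) * a⁻¹) * (2 * ((n:ℝ)+1)⁻¹)
          = 2 * ((n:ℝ)+1) ^ (-β) * a⁻¹ := by
        rw [← hmul]; ring
      rw [heq] at this
      have hpos : (0:ℝ) ≤ 2 * ((n:ℝ)+1) ^ (-β) * b⁻¹ := by positivity
      linarith
  have hsum := Finset.sum_le_sum point
  rw [Finset.sum_add_distrib, ← Finset.mul_sum, ← Finset.mul_sum] at hsum
  -- reflected sum equals harmonic sum
  have hrefl : ∑ k ∈ Finset.range (n+1), ((n:ℝ) + 1 - k)⁻¹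
      = ∑ k ∈ Finset.range (n+1), ((k:ℝ) + 1)⁻¹ := by
    rw [← Finset.sum_range_reflect (fun k => ((n:ℝ) + 1 - k)⁻¹) (n+1)]
    apply Finset.sum_congr rfl
    intro k hk
    rw [Finset.mem_range] at hk
    have hk' : k ≤ n := Nat.lt_succ_iff.mp hk
    congr 1
    have : (n + 1 - 1 - k : ℕ) = n - k := by omega
    rw [this]
    have : ((n - k : ℕ) : ℝ) = (n:ℝ) - k := by
      rw [Nat.cast_sub hk']
    rw [this]; ring
  have hharm := harm_bound (n+1)
  have hharm' : ∑ k ∈ Finset.range (n+1), ((k:ℝ) + 1)⁻¹ ≤ 1 + Real.log ((n:ℝ)+1) := by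
    convert hharm using 3
    push_cast; ring
  -- log bounds : for n ≥ 2, 1 + log(n+1) ≤ 4 log n
  have hn2 : (2:ℝ) ≤ n := by exact_mod_cast hn
  have hlog2 : Real.log 2 ≤ Real.log n := Real.log_le_log (by norm_num) hn2
  have hl2 : (0.6931471803:ℝ) < Real.log 2 := by
    have := Real.log_two_gt_d9; linarith
  have hlogn : (1:ℝ)/2 < Real.log n := by linarith
  have hsq : (n:ℝ) + 1 ≤ (n:ℝ)^2 := by nlinarith
  have hlognn : Real.log ((n:ℝ)+1) ≤ 2 * Real.log n := by
    calc Real.log ((n:ℝ)+1) ≤ Real.log ((n:ℝ)^2) := Real.log_le_log (by positivity) hsq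
      _ = 2 * Real.log n := by
          rw [Real.log_pow]; push_cast; ring
  have hfinal : 1 + Real.log ((n:ℝ)+1) ≤ 4 * Real.log n := by linarith
  calc ∑ k ∈ Finset.range (n + 1), ((k : ℝ) + 1) ^ (-β) * ((n : ℝ) + 1 - k) ^ (-(1 : ℝ))
      ≤ 2 * ((n:ℝ)+1) ^ (-β) * ∑ k ∈ Finset.range (n+1), ((n:ℝ) + 1 - k)⁻¹
        + 2 * ((n:ℝ)+1) ^ (-β) * ∑ k ∈ Finset.range (n+1), ((k:ℝ) + 1)⁻¹ := hsum
    _ ≤ 2 * ((n:ℝ)+1) ^ (-β) * (1 + Real.log ((n:ℝ)+1))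
        + 2 * ((n:ℝ)+1) ^ (-β) * (1 + Real.log ((n:ℝ)+1)) := by
        rw [hrefl]
        have := mul_le_mul_of_nonneg_left hharm' (by positivity : (0:ℝ) ≤ 2 * ((n:ℝ)+1) ^ (-β))
        linarith
    _ ≤ 2 * ((n:ℝ)+1) ^ (-β) * (4 * Real.log n)
        + 2 * ((n:ℝ)+1) ^ (-β) * (4 * Real.log n) := by
        have := mul_le_mul_of_nonneg_left hfinal (by positivity : (0:ℝ) ≤ 2 * ((n:ℝ)+1) ^ (-β))
        linarith
    _ = 16 * ((n:ℝ)+1) ^ (-β) * Real.log n := by ring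
end

section
/- Let b: ℝ^d → ℝ^d be continuous satisfying ⟨x, b(x)⟩ ≤ β̃ − α̃|x|² for some β̃ ∈ ℝ, α̃ > 0, and |b(x)|² ≤ C̃(1+|x|²) for some C̃ > 0. Let σ: ℝ^d → M_d(ℝ) be bounded. Then for every 0 < h < min{√(1 + α̃/C̃) − 1, 1/α̃}, there exist γ ∈ (0,1) and C > 0 such that for all x, w ∈ ℝ^d: |x + h b(x) + σ(x) w| ≤ γ |x| + C(1 + |w|). -/
set_option maxHeartbeats 800000 in
theorem stmt13 (d : ℕ) (b : EuclideanSpace ℝ (Fin d) → EuclideanSpace ℝ (Fin d))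
    (σ : EuclideanSpace ℝ (Fin d) →
      (EuclideanSpace ℝ (Fin d) →L[ℝ] EuclideanSpace ℝ (Fin d)))
    (hb_cont : Continuous b)
    (β' α' : ℝ) (hα' : 0 < α')
    (hdrift : ∀ x, (inner ℝ x (b x) : ℝ) ≤ β' - α' * ‖x‖ ^ 2)
    (C' : ℝ) (hC' : 0 < C') (hgrowth : ∀ x, ‖b x‖ ^ 2 ≤ C' * (1 + ‖x‖ ^ 2))
    (Mσ : ℝ) (hσ : ∀ x, ‖σ x‖ ≤ Mσ)
    (h : ℝ) (hh0 : 0 < h)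
    (hh : h < min (Real.sqrt (1 + α' / C') - 1) (1 / α')) :
    ∃ γ ∈ Set.Ioo (0 : ℝ) 1, ∃ C > 0, ∀ x w,
      ‖x + h • b x + σ x w‖ ≤ γ * ‖x‖ + C * (1 + ‖w‖) := by
  have hh1 : h < Real.sqrt (1 + α' / C') - 1 := lt_of_lt_of_le hh (min_le_left _ _)
  have hh2 : h < 1 / α' := lt_of_lt_of_le hh (min_le_right _ _)
  have hsq : (h + 1) ^ 2 < 1 + α' / C' :=
    (Real.lt_sqrt (by positivity : (0:ℝ) ≤ h + 1)).mp (by linarith)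
  have hKey : h * C' < 2 * α' := by
    have h1 : h ^ 2 + 2 * h < α' / C' := by nlinarith
    have h2 : (h ^ 2 + 2 * h) * C' < α' := by
      rw [div_eq_mul_inv] at h1
      calc (h ^ 2 + 2 * h) * C' < (α' * C'⁻¹) * C' :=
            mul_lt_mul_of_pos_right h1 hC'
        _ = α' := by field_simp
    nlinarith
  have hhα : h * α' < 1 := by
    rw [lt_div_iff₀ hα'] at hh2; linarith
  set K : ℝ := 1 - 2 * h * α' + h ^ 2 * C' with hKdef
  have hK1 : K < 1 := by nlinarith
  set g : ℝ := max K (1/2) with hgdef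
  have hg0 : (0:ℝ) < g := lt_of_lt_of_le (by norm_num) (le_max_right _ _)
  have hg1 : g < 1 := max_lt hK1 (by norm_num)
  set γ : ℝ := Real.sqrt g with hγdef
  have hγ0 : 0 < γ := Real.sqrt_pos.mpr hg0
  have hγ1 : γ < 1 := by
    have := Real.sqrt_lt_sqrt (le_of_lt hg0) hg1
    simpa using this
  have hγsq : γ ^ 2 = g := Real.sq_sqrt (le_of_lt hg0)
  set B : ℝ := max (2 * h * β' + h ^ 2 * C') 1 with hBdef
  have hB1 : (1:ℝ) ≤ B := le_max_right _ _
  have hB0 : (0:ℝ) ≤ B := by linarith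
  set M : ℝ := max Mσ 0 with hMdef
  have hM0 : 0 ≤ M := le_max_right _ _
  refine ⟨γ, ⟨hγ0, hγ1⟩, Real.sqrt B + M + 1, by positivity, fun x w => ?_⟩
  have hdrift1 : ‖x + h • b x‖ ≤ γ * ‖x‖ + Real.sqrt B := by
    have hexp : ‖x + h • b x‖ ^ 2
        = ‖x‖ ^ 2 + 2 * (h * inner ℝ x (b x)) + h ^ 2 * ‖b x‖ ^ 2 := by
      rw [@norm_add_sq_real, real_inner_smul_right, norm_smul, Real.norm_eq_abs,
        abs_of_pos hh0, mul_pow]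
    have hsq2 : ‖x + h • b x‖ ^ 2 ≤ γ ^ 2 * ‖x‖ ^ 2 + B := by
      have h1 : h * inner ℝ x (b x) ≤ h * (β' - α' * ‖x‖ ^ 2) :=
        mul_le_mul_of_nonneg_left (hdrift x) (le_of_lt hh0)
      have h2 : h ^ 2 * ‖b x‖ ^ 2 ≤ h ^ 2 * (C' * (1 + ‖x‖ ^ 2)) :=
        mul_le_mul_of_nonneg_left (hgrowth x) (by positivity)
      have hKg : K ≤ γ ^ 2 := by rw [hγsq]; exact le_max_left _ _
      have hBle : 2 * h * β' + h ^ 2 * C' ≤ B := le_max_left _ _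
      have hxn : (0:ℝ) ≤ ‖x‖ ^ 2 := by positivity
      nlinarith [hexp]
    have hc : γ ^ 2 * ‖x‖ ^ 2 + B ≤ (γ * ‖x‖ + Real.sqrt B) ^ 2 := by
      nlinarith [Real.sq_sqrt hB0,
        mul_nonneg (mul_nonneg hγ0.le (norm_nonneg x)) (Real.sqrt_nonneg B)]
    have h3 : ‖x + h • b x‖ = Real.sqrt (‖x + h • b x‖ ^ 2) :=
      (Real.sqrt_sq (norm_nonneg _)).symm
    rw [h3]
    calc Real.sqrt (‖x + h • b x‖ ^ 2)
        ≤ Real.sqrt ((γ * ‖x‖ + Real.sqrt B) ^ 2) :=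
          Real.sqrt_le_sqrt (hsq2.trans hc)
      _ = γ * ‖x‖ + Real.sqrt B := Real.sqrt_sq (by positivity)
  have hσw : ‖σ x w‖ ≤ M * ‖w‖ :=
    calc ‖σ x w‖ ≤ ‖σ x‖ * ‖w‖ := (σ x).le_opNorm w
      _ ≤ M * ‖w‖ := mul_le_mul_of_nonneg_right
          (le_trans (hσ x) (le_max_left _ _)) (norm_nonneg w)
  calc ‖x + h • b x + σ x w‖ ≤ ‖x + h • b x‖ + ‖σ x w‖ := norm_add_le _ _
    _ ≤ (γ * ‖x‖ + Real.sqrt B) + M * ‖w‖ := add_le_add hdrift1 hσw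
    _ ≤ γ * ‖x‖ + (Real.sqrt B + M + 1) * (1 + ‖w‖) := by
        have h1 : (1:ℝ) ≤ Real.sqrt B := by
          have := Real.sqrt_le_sqrt hB1
          simpa using this
        have hw : (0:ℝ) ≤ ‖w‖ := norm_nonneg w
        nlinarith [Real.sqrt_nonneg B]
end

section
/- Let a ∈ ℝ and b ∈ (0,1) with |a| ≤ b, and let μ = N(0,1). Then there exists a probability measure ν on ℝ² with both marginals equal to μ such that ν({(x,y) : y = x + a}) ≥ 1 − b and ν({(x,y) : |y − x| ≤ M_b}) = 1, where M_b = max(4b, −2 log(b/8)). -/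
open MeasureTheory ProbabilityTheory Real
open scoped ENNReal

/-! Auxiliary: the standard gaussian pdf -/

noncomputable def phiG : ℝ → ℝ := gaussianPDFReal 0 1

lemma phiG_def (x : ℝ) : phiG x = (√(2 * π))⁻¹ * rexp (-x^2 / 2) := by
  simp [phiG, gaussianPDFReal]

lemma phiG_nonneg (x : ℝ) : 0 ≤ phiG x := gaussianPDFReal_nonneg 0 1 x

lemma phiG_meas : Measurable phiG := measurable_gaussianPDFReal 0 1

lemma phiG_int : Integrable phiG := integrable_gaussianPDFReal 0 1

lemma phiG_mono {x y : ℝ} (h : y^2 ≤ x^2) : phiG x ≤ phiG y := by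
  rw [phiG_def, phiG_def]
  have : rexp (-x^2/2) ≤ rexp (-y^2/2) := exp_le_exp.2 (by linarith)
  have h0 : (0:ℝ) ≤ (√(2 * π))⁻¹ := by positivity
  exact mul_le_mul_of_nonneg_left this h0

lemma phiG_even (x : ℝ) : phiG (-x) = phiG x := by rw [phiG_def, phiG_def]; ring_nf

lemma sqrt_two_pi_ge : (2:ℝ) ≤ √(2 * π) := by
  have : (2:ℝ)^2 ≤ 2 * π := by nlinarith [pi_gt_three]
  exact (Real.le_sqrt' (by norm_num)).2 this

lemma phiG_le_half (x : ℝ) : phiG x ≤ 1/2 := by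
  rw [phiG_def]
  have h1 : rexp (-x^2/2) ≤ 1 := exp_le_one_iff.2 (by nlinarith [sq_nonneg x])
  have h0 : (0:ℝ) < √(2 * π) := by positivity
  have h2 : (√(2 * π))⁻¹ ≤ 1/2 := by
    rw [inv_le_comm₀ h0 (by norm_num)]
    simpa using sqrt_two_pi_ge
  calc (√(2 * π))⁻¹ * rexp (-x^2/2) ≤ (1/2) * 1 :=
        mul_le_mul h2 h1 (exp_pos _).le (by norm_num)
    _ = 1/2 := by norm_num

/-! Transport of withDensity along a measure preserving map -/

lemma map_wd {g : ℝ → ℝ≥0∞} (hg : Measurable g) {T : ℝ → ℝ}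
    (hT : MeasurePreserving T (volume : Measure ℝ) volume) :
    (volume.withDensity (fun x => g (T x))).map T = volume.withDensity g := by
  ext s hs
  rw [Measure.map_apply hT.measurable hs, withDensity_apply _ (hT.measurable hs),
    withDensity_apply _ hs]
  have h1 : ∫⁻ x in T ⁻¹' s, g (T x) = ∫⁻ x, (s.indicator g) (T x) := by
    rw [← lintegral_indicator (hT.measurable hs)]
    refine lintegral_congr fun x => ?_
    by_cases hx : T x ∈ s
    · simp [Set.indicator, hx, Set.mem_preimage]
    · simp [Set.indicator, hx, Set.mem_preimage]
  rw [h1, hT.lintegral_comp (hg.indicator hs), lintegral_indicator hs]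

/-! Gaussian tail bound -/

lemma exp_deriv_aux (x : ℝ) : HasDerivAt (fun x : ℝ => -rexp (-x^2/2)) (x * rexp (-x^2/2)) x := by
  have h1 : HasDerivAt (fun x : ℝ => -x^2/2) (-x) x := by
    have := ((hasDerivAt_pow 2 x).neg).div_const 2
    convert this using 1
    all_goals try rfl
    simp
    ring
  have := (h1.exp).neg
  convert this using 1
  all_goals try rfl
  ring

lemma gauss_tail_exp {c : ℝ} (hc : 1 ≤ c) :
    ∫ x in Set.Ioi c, x * rexp (-x^2/2) = rexp (-c^2/2) := by
  have htend : Filter.Tendsto (fun x : ℝ => -rexp (-x^2/2)) Filter.atTop (nhds 0) := by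
    have : Filter.Tendsto (fun x : ℝ => -x^2/2) Filter.atTop Filter.atBot := by
      apply Filter.Tendsto.atBot_div_const (by norm_num)
      exact Filter.tendsto_neg_atBot_iff.2 (Filter.tendsto_pow_atTop (by norm_num))
    simpa using (Real.tendsto_exp_atBot.comp this).neg
  have := integral_Ioi_of_hasDerivAt_of_nonneg (g := fun x : ℝ => -rexp (-x^2/2))
    (g' := fun x => x * rexp (-x^2/2)) (l := 0) (a := c)
    (exp_deriv_aux c).continuousAt.continuousWithinAt
    (fun x _ => exp_deriv_aux x)
    (fun x hx => by
      have : (0:ℝ) < x := lt_of_le_of_lt (le_trans zero_le_one hc) hx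
      positivity)
    htend
  rw [this]; ring

lemma gauss_tail_int {c : ℝ} (hc : 1 ≤ c) :
    IntegrableOn (fun x => x * rexp (-x^2/2)) (Set.Ioi c) := by
  have htend : Filter.Tendsto (fun x : ℝ => -rexp (-x^2/2)) Filter.atTop (nhds 0) := by
    have : Filter.Tendsto (fun x : ℝ => -x^2/2) Filter.atTop Filter.atBot := by
      apply Filter.Tendsto.atBot_div_const (by norm_num)
      exact Filter.tendsto_neg_atBot_iff.2 (Filter.tendsto_pow_atTop (by norm_num))
    simpa using (Real.tendsto_exp_atBot.comp this).neg
  exact integrableOn_Ioi_deriv_of_nonneg (exp_deriv_aux c).continuousAt.continuousWithinAt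
    (fun x _ => exp_deriv_aux x)
    (fun x hx => by
      have : (0:ℝ) < x := lt_of_le_of_lt (le_trans zero_le_one hc) hx
      positivity)
    htend

lemma gauss_tail {c : ℝ} (hc : 1 ≤ c) :
    ∫ x in Set.Ioi c, phiG x ≤ rexp (-c^2/2) / 2 := by
  have hle : ∀ x ∈ Set.Ioi c, phiG x ≤ (1/2) * (x * rexp (-x^2/2)) := by
    intro x hx
    have hx1 : (1:ℝ) ≤ x := le_of_lt (lt_of_le_of_lt hc hx)
    rw [phiG_def]
    have h1 : (√(2*π))⁻¹ ≤ 1/2 := by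
      have h0 : (0:ℝ) < √(2*π) := by positivity
      rw [inv_le_comm₀ h0 (by norm_num)]
      simpa using sqrt_two_pi_ge
    have he : (0:ℝ) < rexp (-x^2/2) := exp_pos _
    calc (√(2*π))⁻¹ * rexp (-x^2/2) ≤ (1/2) * rexp (-x^2/2) :=
          mul_le_mul_of_nonneg_right h1 he.le
      _ ≤ (1/2) * (x * rexp (-x^2/2)) := by nlinarith
  calc ∫ x in Set.Ioi c, phiG x ≤ ∫ x in Set.Ioi c, (1/2) * (x * rexp (-x^2/2)) :=
        setIntegral_mono_on phiG_int.integrableOn ((gauss_tail_int hc).const_mul _)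
          measurableSet_Ioi hle
    _ = (1/2) * ∫ x in Set.Ioi c, x * rexp (-x^2/2) := by rw [integral_const_mul]
    _ = rexp (-c^2/2) / 2 := by rw [gauss_tail_exp hc]; ring

/-! Numeric facts about the constants -/

lemma numeric {a b : ℝ} (hb0 : 0 < b) (hb1 : b < 1) (ha0 : 0 ≤ a) (hab : a ≤ b) :
    (3/2 : ℝ) ≤ (max (4*b) (-2*Real.log (b/8)) - a)/2 ∧
    rexp (-(((max (4*b) (-2*Real.log (b/8)) - a)/2))^2/2) ≤ b/2 := by
  set M := max (4*b) (-2*Real.log (b/8)) with hM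
  set c := (M - a)/2 with hc
  have hlog8 : Real.log 8 = 3 * Real.log 2 := by
    rw [show (8:ℝ) = 2^3 by norm_num, Real.log_pow]; push_cast; ring
  have hlogb8 : Real.log (b/8) = Real.log b - Real.log 8 := Real.log_div hb0.ne' (by norm_num)
  have ht : Real.log b ≤ 0 := Real.log_nonpos hb0.le hb1.le
  have hk1 : (0.6931471803 : ℝ) < Real.log 2 := Real.log_two_gt_d9
  have hk2 : Real.log 2 < 0.6931471808 := Real.log_two_lt_d9
  have hMge : 2 * (3 * Real.log 2 - Real.log b) ≤ M := by
    rw [hM]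
    refine le_max_of_le_right ?_
    rw [hlogb8, hlog8]; ring_nf; linarith
  have hcge : 3 * Real.log 2 - Real.log b - 1/2 ≤ c := by
    rw [hc]; linarith
  have hc32 : (3/2 : ℝ) ≤ c := by nlinarith
  refine ⟨hc32, ?_⟩
  rw [show b/2 = rexp (Real.log (b/2)) by rw [Real.exp_log (by linarith)]]
  apply Real.exp_le_exp.2
  rw [Real.log_div hb0.ne' (by norm_num)]
  have hd : (0:ℝ) < 3 * Real.log 2 - Real.log b - 1/2 := by nlinarith
  have hsq : (3 * Real.log 2 - Real.log b - 1/2)^2 ≤ c^2 := by nlinarith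
  nlinarith [sq_nonneg (Real.log b)]

/-! The four pieces of the coupling -/

noncomputable def d0 (a c : ℝ) : ℝ → ℝ :=
  (Set.Icc (-c) c).indicator (fun x => min (phiG x) (phiG (x+a)))
noncomputable def d1 (a c : ℝ) : ℝ → ℝ :=
  (Set.Iio (-c) ∪ Set.Ioi (c+a)).indicator phiG
noncomputable def d2 (a c : ℝ) : ℝ → ℝ :=
  (Set.Icc (-(a/2)) c).indicator (fun x => phiG x - phiG (x+a))
noncomputable def d3 (a c : ℝ) : ℝ → ℝ :=
  (Set.Ioc c (c+a)).indicator phiG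

lemma d0_meas (a c : ℝ) : Measurable (d0 a c) :=
  (phiG_meas.min (phiG_meas.comp (measurable_id.add_const a))).indicator measurableSet_Icc
lemma d1_meas (a c : ℝ) : Measurable (d1 a c) :=
  phiG_meas.indicator (measurableSet_Iio.union measurableSet_Ioi)
lemma d2_meas (a c : ℝ) : Measurable (d2 a c) :=
  (phiG_meas.sub (phiG_meas.comp (measurable_id.add_const a))).indicator measurableSet_Icc
lemma d3_meas (a c : ℝ) : Measurable (d3 a c) :=
  phiG_meas.indicator measurableSet_Ioc

lemma d0_nonneg (a c x : ℝ) : 0 ≤ d0 a c x :=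
  Set.indicator_nonneg (fun x _ => le_min (phiG_nonneg x) (phiG_nonneg _)) x
lemma d1_nonneg (a c x : ℝ) : 0 ≤ d1 a c x :=
  Set.indicator_nonneg (fun x _ => phiG_nonneg x) x
lemma d2_nonneg {a c : ℝ} (ha0 : 0 ≤ a) (x : ℝ) : 0 ≤ d2 a c x := by
  refine Set.indicator_nonneg (fun x hx => ?_) x
  rw [Set.mem_Icc] at hx
  have : phiG (x+a) ≤ phiG x := phiG_mono (by nlinarith [hx.1])
  linarith
lemma d3_nonneg (a c x : ℝ) : 0 ≤ d3 a c x :=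
  Set.indicator_nonneg (fun x _ => phiG_nonneg x) x

lemma d0_le (a c x : ℝ) : d0 a c x ≤ phiG x := by
  unfold d0
  by_cases h : x ∈ Set.Icc (-c) c
  · rw [Set.indicator_of_mem h]; exact min_le_left _ _
  · rw [Set.indicator_of_notMem h]; exact phiG_nonneg x

lemma sum_fst {a c : ℝ} (ha0 : 0 ≤ a) (hac : a ≤ c) (x : ℝ) :
    d0 a c x + d1 a c x + d2 a c x + d3 a c x = phiG x := by
  have ha2c : a/2 ≤ c := by linarith
  have hc0 : 0 ≤ c := le_trans ha0 hac
  unfold d0 d1 d2 d3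
  rcases lt_or_ge x (-c) with h1 | h1
  · rw [Set.indicator_of_notMem (by rw [Set.mem_Icc]; push_neg; intro h; linarith),
      Set.indicator_of_mem (Set.mem_union_left _ (show x ∈ Set.Iio (-c) from h1)),
      Set.indicator_of_notMem (by rw [Set.mem_Icc]; push_neg; intro h; linarith),
      Set.indicator_of_notMem (by rw [Set.mem_Ioc]; push_neg; intro h; linarith)]
    ring
  rcases lt_or_ge x (-(a/2)) with h2 | h2
  · rw [Set.indicator_of_mem (by rw [Set.mem_Icc]; constructor <;> linarith),
      Set.indicator_of_notMem (by
        rw [Set.mem_union, Set.mem_Iio, Set.mem_Ioi]; push_neg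
        constructor <;> linarith),
      Set.indicator_of_notMem (by rw [Set.mem_Icc]; push_neg; intro h; linarith),
      Set.indicator_of_notMem (by rw [Set.mem_Ioc]; push_neg; intro h; linarith)]
    have : min (phiG x) (phiG (x+a)) = phiG x :=
      min_eq_left (phiG_mono (by nlinarith))
    rw [this]; ring
  rcases le_or_gt x c with h3 | h3
  · rw [Set.indicator_of_mem (by rw [Set.mem_Icc]; constructor <;> linarith),
      Set.indicator_of_notMem (by
        rw [Set.mem_union, Set.mem_Iio, Set.mem_Ioi]; push_neg
        constructor <;> linarith),
      Set.indicator_of_mem (by rw [Set.mem_Icc]; exact ⟨h2, h3⟩),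
      Set.indicator_of_notMem (by rw [Set.mem_Ioc]; push_neg; intro h; linarith)]
    have : min (phiG x) (phiG (x+a)) = phiG (x+a) :=
      min_eq_right (phiG_mono (by nlinarith))
    rw [this]; ring
  rcases le_or_gt x (c+a) with h4 | h4
  · rw [Set.indicator_of_notMem (by rw [Set.mem_Icc]; push_neg; intro h; linarith),
      Set.indicator_of_notMem (by
        rw [Set.mem_union, Set.mem_Iio, Set.mem_Ioi]; push_neg
        constructor <;> linarith),
      Set.indicator_of_notMem (by rw [Set.mem_Icc]; push_neg; intro h; linarith),
      Set.indicator_of_mem (by rw [Set.mem_Ioc]; exact ⟨h3, h4⟩)]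
    ring
  · rw [Set.indicator_of_notMem (by rw [Set.mem_Icc]; push_neg; intro h; linarith),
      Set.indicator_of_mem (Set.mem_union_right _ (show x ∈ Set.Ioi (c+a) from h4)),
      Set.indicator_of_notMem (by rw [Set.mem_Icc]; push_neg; intro h; linarith),
      Set.indicator_of_notMem (by rw [Set.mem_Ioc]; push_neg; intro h; linarith)]
    ring

lemma sum_snd {a c : ℝ} (ha0 : 0 ≤ a) (hac : a ≤ c) (y : ℝ) :
    d0 a c (y - a) + d1 a c y + d2 a c (-y) + d3 a c (a - y) = phiG y := by
  have ha2c : a/2 ≤ c := by linarith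
  have hc0 : 0 ≤ c := le_trans ha0 hac
  unfold d0 d1 d2 d3
  rcases lt_or_ge y (-c) with h1 | h1
  · rw [Set.indicator_of_notMem (by rw [Set.mem_Icc]; push_neg; intro h; linarith),
      Set.indicator_of_mem (Set.mem_union_left _ (show y ∈ Set.Iio (-c) from h1)),
      Set.indicator_of_notMem (by rw [Set.mem_Icc]; push_neg; intro h; linarith),
      Set.indicator_of_notMem (by rw [Set.mem_Ioc]; push_neg; intro h; linarith)]
    ring
  rcases lt_or_ge y (a - c) with h2 | h2
  · rw [Set.indicator_of_notMem (by rw [Set.mem_Icc]; push_neg; intro h; linarith),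
      Set.indicator_of_notMem (by
        rw [Set.mem_union, Set.mem_Iio, Set.mem_Ioi]; push_neg
        constructor <;> linarith),
      Set.indicator_of_mem (by rw [Set.mem_Icc]; constructor <;> linarith),
      Set.indicator_of_mem (by rw [Set.mem_Ioc]; constructor <;> linarith)]
    have e1 : phiG (-y) = phiG y := phiG_even y
    have e2 : phiG (-y + a) = phiG (y - a) := by
      rw [show -y + a = -(y - a) by ring, phiG_even]
    have e3 : phiG (a - y) = phiG (y - a) := by
      rw [show a - y = -(y - a) by ring, phiG_even]
    rw [e1, e2, e3]; ring
  rcases le_or_gt y (a/2) with h3 | h3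
  · rw [Set.indicator_of_mem (by rw [Set.mem_Icc]; constructor <;> linarith),
      Set.indicator_of_notMem (by
        rw [Set.mem_union, Set.mem_Iio, Set.mem_Ioi]; push_neg
        constructor <;> linarith),
      Set.indicator_of_mem (by rw [Set.mem_Icc]; constructor <;> linarith),
      Set.indicator_of_notMem (by rw [Set.mem_Ioc]; push_neg; intro h; linarith)]
    have e1 : phiG (-y) = phiG y := phiG_even y
    have e2 : phiG (-y + a) = phiG (y - a) := by
      rw [show -y + a = -(y - a) by ring, phiG_even]
    have hmin : min (phiG (y - a)) (phiG (y - a + a)) = phiG (y - a) := by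
      rw [show y - a + a = y by ring]
      exact min_eq_left (phiG_mono (by nlinarith))
    rw [hmin, e1, e2]; ring
  rcases le_or_gt y (c + a) with h4 | h4
  · rw [Set.indicator_of_mem (by rw [Set.mem_Icc]; constructor <;> linarith),
      Set.indicator_of_notMem (by
        rw [Set.mem_union, Set.mem_Iio, Set.mem_Ioi]; push_neg
        constructor <;> linarith),
      Set.indicator_of_notMem (by rw [Set.mem_Icc]; push_neg; intro h; linarith),
      Set.indicator_of_notMem (by rw [Set.mem_Ioc]; push_neg; intro h; linarith)]
    have hmin : min (phiG (y - a)) (phiG (y - a + a)) = phiG y := by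
      rw [show y - a + a = y by ring]
      exact min_eq_right (phiG_mono (by nlinarith))
    rw [hmin]; ring
  · rw [Set.indicator_of_notMem (by rw [Set.mem_Icc]; push_neg; intro h; linarith),
      Set.indicator_of_mem (Set.mem_union_right _ (show y ∈ Set.Ioi (c+a) from h4)),
      Set.indicator_of_notMem (by rw [Set.mem_Icc]; push_neg; intro h; linarith),
      Set.indicator_of_notMem (by rw [Set.mem_Ioc]; push_neg; intro h; linarith)]
    ring

lemma d1_le (a c x : ℝ) : d1 a c x ≤ phiG x := by unfold d1; exact Set.indicator_le_self' (fun x _ => phiG_nonneg x) x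
lemma d3_le (a c x : ℝ) : d3 a c x ≤ phiG x := by unfold d3; exact Set.indicator_le_self' (fun x _ => phiG_nonneg x) x
lemma d2_le (a c x : ℝ) : d2 a c x ≤ phiG x := by
  unfold d2
  by_cases h : x ∈ Set.Icc (-(a/2)) c
  · rw [Set.indicator_of_mem h]; have := phiG_nonneg (x+a); linarith
  · rw [Set.indicator_of_notMem h]; exact phiG_nonneg x

lemma int_of_le_phi {f : ℝ → ℝ} (hm : Measurable f) (h0 : ∀ x, 0 ≤ f x)
    (h1 : ∀ x, f x ≤ phiG x) : Integrable f := by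
  refine phiG_int.mono hm.aestronglyMeasurable (ae_of_all _ fun x => ?_)
  rw [Real.norm_eq_abs, Real.norm_eq_abs, abs_of_nonneg (h0 x), abs_of_nonneg (phiG_nonneg x)]
  exact h1 x

lemma d0_int (a c : ℝ) : Integrable (d0 a c) :=
  int_of_le_phi (d0_meas a c) (d0_nonneg a c) (d0_le a c)
lemma d1_int (a c : ℝ) : Integrable (d1 a c) :=
  int_of_le_phi (d1_meas a c) (d1_nonneg a c) (d1_le a c)
lemma d2_int {a c : ℝ} (ha0 : 0 ≤ a) : Integrable (d2 a c) :=
  int_of_le_phi (d2_meas a c) (d2_nonneg ha0) (d2_le a c)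
lemma d3_int (a c : ℝ) : Integrable (d3 a c) :=
  int_of_le_phi (d3_meas a c) (d3_nonneg a c) (d3_le a c)

lemma tail_left (c : ℝ) : ∫ x in Set.Iio (-c), phiG x = ∫ x in Set.Ioi c, phiG x := by
  have h := integral_comp_neg_Ioi c phiG
  have h2 : (∫ x in Set.Ioi c, phiG (-x)) = ∫ x in Set.Ioi c, phiG x := by
    refine integral_congr_ae (ae_of_all _ fun x => phiG_even x)
  have h3 : (∫ x in Set.Iic (-c), phiG x) = ∫ x in Set.Iio (-c), phiG x := by
    refine integral_Iic_eq_integral_Iio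
  rw [← h3, ← h, h2]

lemma d1_integral {a c : ℝ} (hc : 1 ≤ c) (ha0 : 0 ≤ a) :
    ∫ x, d1 a c x ≤ rexp (-c^2/2) := by
  have hdisj : Disjoint (Set.Iio (-c)) (Set.Ioi (c+a)) := by
    rw [Set.disjoint_left]
    intro x hx hx'
    simp only [Set.mem_Iio] at hx
    simp only [Set.mem_Ioi] at hx'
    linarith
  have key : ∫ x, d1 a c x
      = (∫ x in Set.Iio (-c), phiG x) + ∫ x in Set.Ioi (c+a), phiG x := by
    unfold d1
    rw [integral_indicator (measurableSet_Iio.union measurableSet_Ioi),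
      setIntegral_union hdisj measurableSet_Ioi phiG_int.integrableOn phiG_int.integrableOn]
  rw [key, tail_left]
  have hmono : ∫ x in Set.Ioi (c+a), phiG x ≤ ∫ x in Set.Ioi c, phiG x :=
    setIntegral_mono_set phiG_int.integrableOn (ae_of_all _ phiG_nonneg)
      ((Set.Ioi_subset_Ioi (by linarith)).eventuallyLE)
  have ht := gauss_tail hc
  linarith

lemma d23_integral {a c : ℝ} (ha0 : 0 ≤ a) (hac : a ≤ c) :
    (∫ x, d2 a c x) + ∫ x, d3 a c x ≤ a/2 := by
  have ha2c : a/2 ≤ c := by linarith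
  have hii : ∀ u v : ℝ, IntervalIntegrable phiG volume u v :=
    fun u v => phiG_int.intervalIntegrable
  have hiia : IntervalIntegrable (fun x => phiG (x+a)) volume (-(a/2)) c := by
    exact (phiG_int.comp_add_right a).intervalIntegrable
  have h2 : ∫ x, d2 a c x = ∫ x in (-(a/2))..c, (phiG x - phiG (x+a)) := by
    unfold d2
    rw [integral_indicator measurableSet_Icc, integral_Icc_eq_integral_Ioc,
      ← intervalIntegral.integral_of_le (by linarith)]
  have h3 : ∫ x, d3 a c x = ∫ x in c..(c+a), phiG x := by
    unfold d3
    rw [integral_indicator measurableSet_Ioc, ← intervalIntegral.integral_of_le (by linarith)]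
  have h4 : ∫ x in (-(a/2))..c, phiG (x+a) = ∫ x in (a/2)..(c+a), phiG x := by
    have := intervalIntegral.integral_comp_add_right (a := -(a/2)) (b := c) (d := a) phiG
    rw [this, show -(a/2)+a = a/2 by ring]
  have h5 : (∫ x in (a/2)..c, phiG x) + ∫ x in c..(c+a), phiG x
      = ∫ x in (a/2)..(c+a), phiG x :=
    intervalIntegral.integral_add_adjacent_intervals (hii _ _) (hii _ _)
  have h6 : (∫ x in (-(a/2))..(a/2), phiG x) + ∫ x in (a/2)..c, phiG x
      = ∫ x in (-(a/2))..c, phiG x :=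
    intervalIntegral.integral_add_adjacent_intervals (hii _ _) (hii _ _)
  have hsub : ∫ x in (-(a/2))..c, (phiG x - phiG (x+a))
      = (∫ x in (-(a/2))..c, phiG x) - ∫ x in (-(a/2))..c, phiG (x+a) :=
    intervalIntegral.integral_sub (hii _ _) hiia
  have hbound : ∫ x in (-(a/2))..(a/2), phiG x ≤ a/2 := by
    have hm : ∫ x in (-(a/2))..(a/2), phiG x ≤ ∫ x in (-(a/2))..(a/2), (1/2 : ℝ) := by
      refine intervalIntegral.integral_mono_on (by linarith) (hii _ _)
        (intervalIntegrable_const) (fun x _ => phiG_le_half x)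
    rw [intervalIntegral.integral_const] at hm
    have : (a/2 - -(a/2)) • (1/2 : ℝ) = a/2 := by
      rw [smul_eq_mul]; ring
    linarith [hm.trans_eq this]
  rw [h2, h3, hsub, h4]
  linarith

lemma meas_diag (a : ℝ) : MeasurableSet {p : ℝ × ℝ | p.2 = p.1 + a} := by
  have : {p : ℝ × ℝ | p.2 = p.1 + a} = (fun p : ℝ × ℝ => p.2 - p.1) ⁻¹' {a} := by
    ext p; simp [sub_eq_iff_eq_add']
  rw [this]
  exact (measurable_snd.sub measurable_fst) (measurableSet_singleton a)

lemma meas_band (M : ℝ) : MeasurableSet {p : ℝ × ℝ | |p.2 - p.1| ≤ M} :=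
  (measurable_snd.sub measurable_fst).abs measurableSet_Iic

lemma gauss_map_neg : (gaussianReal 0 1).map (fun x : ℝ => -x) = gaussianReal 0 1 := by
  rw [gaussianReal_of_var_ne_zero 0 one_ne_zero]
  have h : (fun x : ℝ => gaussianPDF 0 1 (-x)) = gaussianPDF 0 1 := by
    funext x
    show ENNReal.ofReal (phiG (-x)) = ENNReal.ofReal (phiG x)
    rw [phiG_even]
  calc (volume.withDensity (gaussianPDF 0 1)).map (fun x : ℝ => -x)
      = (volume.withDensity (fun x => gaussianPDF 0 1 (-x))).map (fun x : ℝ => -x) := by rw [h]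
    _ = volume.withDensity (gaussianPDF 0 1) :=
        map_wd (measurable_gaussianPDF 0 1) (Measure.measurePreserving_neg volume)

lemma main_coupling {a b : ℝ} (hb0 : 0 < b) (hb1 : b < 1) (ha0 : 0 ≤ a) (hab : a ≤ b) :
    ∃ ν : Measure (ℝ × ℝ),
      IsProbabilityMeasure ν ∧
      ν.map Prod.fst = gaussianReal 0 1 ∧
      ν.map Prod.snd = gaussianReal 0 1 ∧
      ENNReal.ofReal (1 - b) ≤ ν {p | p.2 = p.1 + a} ∧
      ν {p | |p.2 - p.1| ≤ max (4 * b) (-2 * Real.log (b / 8))} = 1 := by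
  obtain ⟨hc32, hexp⟩ := numeric hb0 hb1 ha0 hab
  set M := max (4 * b) (-2 * Real.log (b / 8)) with hM
  set c := (M - a) / 2 with hcdef
  have hc1 : (1:ℝ) ≤ c := by linarith
  have hac : a ≤ c := by linarith
  have ha2c : a / 2 ≤ c := by linarith
  have h2c : 2 * c + a = M := by rw [hcdef]; ring
  have hMb : 4 * b ≤ M := le_max_left _ _
  -- densities in ℝ≥0∞
  set F0 : ℝ → ℝ≥0∞ := fun x => ENNReal.ofReal (d0 a c x) with hF0
  set F1 : ℝ → ℝ≥0∞ := fun x => ENNReal.ofReal (d1 a c x) with hF1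
  set F2 : ℝ → ℝ≥0∞ := fun x => ENNReal.ofReal (d2 a c x) with hF2
  set F3 : ℝ → ℝ≥0∞ := fun x => ENNReal.ofReal (d3 a c x) with hF3
  have hF0m : Measurable F0 := (d0_meas a c).ennreal_ofReal
  have hF1m : Measurable F1 := (d1_meas a c).ennreal_ofReal
  have hF2m : Measurable F2 := (d2_meas a c).ennreal_ofReal
  have hF3m : Measurable F3 := (d3_meas a c).ennreal_ofReal
  -- the coupling maps
  have hk0 : Measurable (fun x : ℝ => (x, x + a)) :=
    measurable_id.prodMk (measurable_id.add_const a)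
  have hk1 : Measurable (fun x : ℝ => (x, x)) := measurable_id.prodMk measurable_id
  have hk2 : Measurable (fun x : ℝ => (x, -x)) := measurable_id.prodMk measurable_id.neg
  have hk3 : Measurable (fun x : ℝ => (x, a - x)) :=
    measurable_id.prodMk (measurable_const.sub measurable_id)
  set ν : Measure (ℝ × ℝ) :=
    (volume.withDensity F0).map (fun x : ℝ => (x, x + a)) +
    (volume.withDensity F1).map (fun x : ℝ => (x, x)) +
    (volume.withDensity F2).map (fun x : ℝ => (x, -x)) +
    (volume.withDensity F3).map (fun x : ℝ => (x, a - x)) with hν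
  -- pointwise sum of densities
  have hfe : (fun x => F0 x + F1 x + F2 x + F3 x) = gaussianPDF 0 1 := by
    funext x
    rw [hF0, hF1, hF2, hF3]
    show ENNReal.ofReal (d0 a c x) + ENNReal.ofReal (d1 a c x) + ENNReal.ofReal (d2 a c x)
        + ENNReal.ofReal (d3 a c x) = ENNReal.ofReal (phiG x)
    rw [← ENNReal.ofReal_add (d0_nonneg a c x) (d1_nonneg a c x),
      ← ENNReal.ofReal_add (add_nonneg (d0_nonneg a c x) (d1_nonneg a c x)) (d2_nonneg ha0 x),
      ← ENNReal.ofReal_add (add_nonneg (add_nonneg (d0_nonneg a c x) (d1_nonneg a c x))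
        (d2_nonneg ha0 x)) (d3_nonneg a c x),
      sum_fst ha0 hac x]
  -- first marginal
  have hmap_fst : ν.map Prod.fst = gaussianReal 0 1 := by
    rw [hν, Measure.map_add _ _ measurable_fst, Measure.map_add _ _ measurable_fst,
      Measure.map_add _ _ measurable_fst,
      Measure.map_map measurable_fst hk0, Measure.map_map measurable_fst hk1,
      Measure.map_map measurable_fst hk2, Measure.map_map measurable_fst hk3]
    have e0 : (Prod.fst ∘ fun x : ℝ => (x, x + a)) = id := rfl
    have e1 : (Prod.fst ∘ fun x : ℝ => (x, x)) = id := rfl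
    have e2 : (Prod.fst ∘ fun x : ℝ => (x, -x)) = id := rfl
    have e3 : (Prod.fst ∘ fun x : ℝ => (x, a - x)) = id := rfl
    rw [e0, e1, e2, e3, Measure.map_id, Measure.map_id, Measure.map_id, Measure.map_id,
      ← withDensity_add_left hF0m,
      ← withDensity_add_left (show Measurable (F0 + F1) from hF0m.add hF1m),
      ← withDensity_add_left (show Measurable (F0 + F1 + F2) from (hF0m.add hF1m).add hF2m)]
    rw [gaussianReal_of_var_ne_zero 0 one_ne_zero]
    congr 1
  -- second marginal
  set G0 : ℝ → ℝ≥0∞ := fun y => ENNReal.ofReal (d0 a c (y - a)) with hG0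
  set G2 : ℝ → ℝ≥0∞ := fun y => ENNReal.ofReal (d2 a c (-y)) with hG2
  set G3 : ℝ → ℝ≥0∞ := fun y => ENNReal.ofReal (d3 a c (a - y)) with hG3
  have hG0m : Measurable G0 := ((d0_meas a c).comp (measurable_id.sub_const a)).ennreal_ofReal
  have hG2m : Measurable G2 := ((d2_meas a c).comp measurable_id.neg).ennreal_ofReal
  have hG3m : Measurable G3 := ((d3_meas a c).comp (measurable_const.sub measurable_id)).ennreal_ofReal
  have hmap0 : (volume.withDensity F0).map (fun x : ℝ => x + a) = volume.withDensity G0 := by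
    have he : (fun x : ℝ => G0 (x + a)) = F0 := by
      funext x; rw [hG0, hF0]; simp
    rw [← he]
    exact map_wd hG0m (measurePreserving_add_right volume a)
  have hmap2 : (volume.withDensity F2).map (fun x : ℝ => -x) = volume.withDensity G2 := by
    have he : (fun x : ℝ => G2 (-x)) = F2 := by
      funext x; rw [hG2, hF2]; simp
    rw [← he]
    exact map_wd hG2m (Measure.measurePreserving_neg volume)
  have hmap3 : (volume.withDensity F3).map (fun x : ℝ => a - x) = volume.withDensity G3 := by
    have he : (fun x : ℝ => G3 (a - x)) = F3 := by
      funext x; rw [hG3, hF3]; simp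
    have hmp : MeasurePreserving (fun x : ℝ => a - x) volume volume := by
      have : (fun x : ℝ => a - x) = ((fun x : ℝ => x + a) ∘ fun x : ℝ => -x) := by
        funext x; simp [sub_eq_neg_add]
      rw [this]
      exact (measurePreserving_add_right volume a).comp (Measure.measurePreserving_neg volume)
    rw [← he]
    exact map_wd hG3m hmp
  have hfe2 : (fun y => G0 y + F1 y + G2 y + G3 y) = gaussianPDF 0 1 := by
    funext y
    rw [hG0, hF1, hG2, hG3]
    show ENNReal.ofReal (d0 a c (y - a)) + ENNReal.ofReal (d1 a c y)
        + ENNReal.ofReal (d2 a c (-y)) + ENNReal.ofReal (d3 a c (a - y))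
        = ENNReal.ofReal (phiG y)
    rw [← ENNReal.ofReal_add (d0_nonneg a c _) (d1_nonneg a c _),
      ← ENNReal.ofReal_add (add_nonneg (d0_nonneg a c _) (d1_nonneg a c _)) (d2_nonneg ha0 _),
      ← ENNReal.ofReal_add (add_nonneg (add_nonneg (d0_nonneg a c _) (d1_nonneg a c _))
        (d2_nonneg ha0 _)) (d3_nonneg a c _),
      sum_snd ha0 hac y]
  have hmap_snd : ν.map Prod.snd = gaussianReal 0 1 := by
    rw [hν, Measure.map_add _ _ measurable_snd, Measure.map_add _ _ measurable_snd,
      Measure.map_add _ _ measurable_snd,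
      Measure.map_map measurable_snd hk0, Measure.map_map measurable_snd hk1,
      Measure.map_map measurable_snd hk2, Measure.map_map measurable_snd hk3]
    have e0 : (Prod.snd ∘ fun x : ℝ => (x, x + a)) = (fun x : ℝ => x + a) := rfl
    have e1 : (Prod.snd ∘ fun x : ℝ => (x, x)) = id := rfl
    have e2 : (Prod.snd ∘ fun x : ℝ => (x, -x)) = (fun x : ℝ => -x) := rfl
    have e3 : (Prod.snd ∘ fun x : ℝ => (x, a - x)) = (fun x : ℝ => a - x) := rfl
    rw [e0, e1, e2, e3, Measure.map_id, hmap0, hmap2, hmap3,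
      ← withDensity_add_left hG0m,
      ← withDensity_add_left (show Measurable (G0 + F1) from hG0m.add hF1m),
      ← withDensity_add_left (show Measurable (G0 + F1 + G2) from (hG0m.add hF1m).add hG2m)]
    rw [gaussianReal_of_var_ne_zero 0 one_ne_zero]
    congr 1
  -- probability measure
  have hprob : IsProbabilityMeasure ν := by
    constructor
    have h1 : (ν.map Prod.fst) Set.univ = ν Set.univ := by
      rw [Measure.map_apply measurable_fst MeasurableSet.univ, Set.preimage_univ]
    rw [← h1, hmap_fst]
    exact measure_univ
  refine ⟨ν, hprob, hmap_fst, hmap_snd, ?_, ?_⟩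
  · -- diagonal mass
    have hsum1 : (∫⁻ x, F0 x) + ((∫⁻ x, F1 x) + ((∫⁻ x, F2 x) + ∫⁻ x, F3 x)) = 1 := by
      calc (∫⁻ x, F0 x) + ((∫⁻ x, F1 x) + ((∫⁻ x, F2 x) + ∫⁻ x, F3 x))
          = ∫⁻ x, (F0 x + (F1 x + (F2 x + F3 x))) := by
            rw [lintegral_add_left hF0m, lintegral_add_left hF1m, lintegral_add_left hF2m]
        _ = ∫⁻ x, gaussianPDF 0 1 x :=
            lintegral_congr (fun x => by rw [← congrFun hfe x]; ring)
        _ = 1 := lintegral_gaussianPDF_eq_one 0 one_ne_zero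
    have hint1 : ∫⁻ x, F1 x = ENNReal.ofReal (∫ x, d1 a c x) :=
      (ofReal_integral_eq_lintegral_ofReal (d1_int a c) (ae_of_all _ (d1_nonneg a c))).symm
    have hint2 : ∫⁻ x, F2 x = ENNReal.ofReal (∫ x, d2 a c x) :=
      (ofReal_integral_eq_lintegral_ofReal (d2_int ha0) (ae_of_all _ (d2_nonneg ha0))).symm
    have hint3 : ∫⁻ x, F3 x = ENNReal.ofReal (∫ x, d3 a c x) :=
      (ofReal_integral_eq_lintegral_ofReal (d3_int a c) (ae_of_all _ (d3_nonneg a c))).symm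
    have hnn1 : 0 ≤ ∫ x, d1 a c x := integral_nonneg (d1_nonneg a c)
    have hnn2 : 0 ≤ ∫ x, d2 a c x := integral_nonneg (d2_nonneg ha0)
    have hnn3 : 0 ≤ ∫ x, d3 a c x := integral_nonneg (d3_nonneg a c)
    have hRle : (∫⁻ x, F1 x) + ((∫⁻ x, F2 x) + ∫⁻ x, F3 x) ≤ ENNReal.ofReal b := by
      rw [hint1, hint2, hint3, ← ENNReal.ofReal_add hnn2 hnn3,
        ← ENNReal.ofReal_add hnn1 (by positivity)]
      apply ENNReal.ofReal_le_ofReal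
      have hd1 := d1_integral hc1 ha0
      have hd23 := d23_integral ha0 hac
      linarith
    have hRne : (∫⁻ x, F1 x) + ((∫⁻ x, F2 x) + ∫⁻ x, F3 x) ≠ ∞ :=
      (lt_of_le_of_lt hRle ENNReal.ofReal_lt_top).ne
    have hF0val : ∫⁻ x, F0 x = 1 - ((∫⁻ x, F1 x) + ((∫⁻ x, F2 x) + ∫⁻ x, F3 x)) :=
      ENNReal.eq_sub_of_add_eq hRne hsum1
    have hlow : ENNReal.ofReal (1 - b) ≤ ∫⁻ x, F0 x := by
      rw [hF0val]
      calc ENNReal.ofReal (1 - b) = ENNReal.ofReal 1 - ENNReal.ofReal b :=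
            ENNReal.ofReal_sub 1 hb0.le
        _ = 1 - ENNReal.ofReal b := by rw [ENNReal.ofReal_one]
        _ ≤ 1 - ((∫⁻ x, F1 x) + ((∫⁻ x, F2 x) + ∫⁻ x, F3 x)) := tsub_le_tsub_left hRle 1
    have hpre : (fun x : ℝ => (x, x + a)) ⁻¹' {p : ℝ × ℝ | p.2 = p.1 + a} = Set.univ := by
      ext x; simp
    have hterm0 : ((volume.withDensity F0).map (fun x : ℝ => (x, x + a)))
        {p : ℝ × ℝ | p.2 = p.1 + a} = ∫⁻ x, F0 x := by
      rw [Measure.map_apply hk0 (meas_diag a), hpre]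
      simp
    calc ENNReal.ofReal (1 - b) ≤ ∫⁻ x, F0 x := hlow
      _ = ((volume.withDensity F0).map (fun x : ℝ => (x, x + a)))
          {p : ℝ × ℝ | p.2 = p.1 + a} := hterm0.symm
      _ ≤ ν {p : ℝ × ℝ | p.2 = p.1 + a} := by
          rw [hν]
          exact le_add_right (le_add_right (le_add_right (le_refl _)))
  · -- the band has full measure
    set B := {p : ℝ × ℝ | |p.2 - p.1| ≤ M} with hB
    have hBm : MeasurableSet B := meas_band M
    have hcompl : ν Bᶜ = 0 := by
      rw [hν]
      have hz0 : ((volume.withDensity F0).map (fun x : ℝ => (x, x + a))) Bᶜ = 0 := by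
        rw [Measure.map_apply hk0 hBm.compl, withDensity_apply _ (hk0 hBm.compl)]
        have hzero : ∀ x ∈ (fun x : ℝ => (x, x + a)) ⁻¹' Bᶜ, F0 x = 0 := by
          intro x hx
          exfalso
          simp only [Set.mem_preimage, Set.mem_compl_iff, hB, Set.mem_setOf_eq,
            add_sub_cancel_left] at hx
          rw [abs_of_nonneg ha0] at hx
          exact hx (by linarith)
        rw [setLIntegral_congr_fun (hk0 hBm.compl) (g := fun _ => 0) hzero, lintegral_zero]
      have hz1 : ((volume.withDensity F1).map (fun x : ℝ => (x, x))) Bᶜ = 0 := by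
        rw [Measure.map_apply hk1 hBm.compl, withDensity_apply _ (hk1 hBm.compl)]
        have hzero : ∀ x ∈ (fun x : ℝ => (x, x)) ⁻¹' Bᶜ, F1 x = 0 := by
          intro x hx
          exfalso
          simp only [Set.mem_preimage, Set.mem_compl_iff, hB, Set.mem_setOf_eq,
            sub_self, abs_zero] at hx
          exact hx (by linarith)
        rw [setLIntegral_congr_fun (hk1 hBm.compl) (g := fun _ => 0) hzero, lintegral_zero]
      have hz2 : ((volume.withDensity F2).map (fun x : ℝ => (x, -x))) Bᶜ = 0 := by
        rw [Measure.map_apply hk2 hBm.compl, withDensity_apply _ (hk2 hBm.compl)]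
        have hzero : ∀ x ∈ (fun x : ℝ => (x, -x)) ⁻¹' Bᶜ, F2 x = 0 := by
          intro x hx
          simp only [Set.mem_preimage, Set.mem_compl_iff, hB, Set.mem_setOf_eq] at hx
          rw [hF2]
          have hd : d2 a c x = 0 := by
            unfold d2
            refine Set.indicator_of_notMem ?_ _
            intro hmem
            rw [Set.mem_Icc] at hmem
            obtain ⟨hm1, hm2⟩ := hmem
            apply hx
            have h1 : -x - x = -(2*x) := by ring
            rw [h1, abs_neg, abs_le]
            constructor
            · linarith
            · linarith
          simp [hd]
        rw [setLIntegral_congr_fun (hk2 hBm.compl) (g := fun _ => 0) hzero, lintegral_zero]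
      have hz3 : ((volume.withDensity F3).map (fun x : ℝ => (x, a - x))) Bᶜ = 0 := by
        rw [Measure.map_apply hk3 hBm.compl, withDensity_apply _ (hk3 hBm.compl)]
        have hzero : ∀ x ∈ (fun x : ℝ => (x, a - x)) ⁻¹' Bᶜ, F3 x = 0 := by
          intro x hx
          simp only [Set.mem_preimage, Set.mem_compl_iff, hB, Set.mem_setOf_eq] at hx
          rw [hF3]
          have hd : d3 a c x = 0 := by
            unfold d3
            refine Set.indicator_of_notMem ?_ _
            intro hmem
            rw [Set.mem_Ioc] at hmem
            obtain ⟨hm1, hm2⟩ := hmem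
            apply hx
            rw [abs_le]
            constructor
            · linarith
            · linarith
          simp [hd]
        rw [setLIntegral_congr_fun (hk3 hBm.compl) (g := fun _ => 0) hzero, lintegral_zero]
      simp [Measure.add_apply, hz0, hz1, hz2, hz3]
    haveI := hprob
    exact (prob_compl_eq_zero_iff hBm).1 hcompl

theorem stmt17 (a b : ℝ) (hb : b ∈ Set.Ioo (0 : ℝ) 1) (ha : |a| ≤ b) :
    ∃ ν : Measure (ℝ × ℝ),
      IsProbabilityMeasure ν ∧
      ν.map Prod.fst = ProbabilityTheory.gaussianReal 0 1 ∧
      ν.map Prod.snd = ProbabilityTheory.gaussianReal 0 1 ∧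
      ENNReal.ofReal (1 - b) ≤ ν {p | p.2 = p.1 + a} ∧
      ν {p | |p.2 - p.1| ≤ max (4 * b) (-2 * Real.log (b / 8))} = 1 := by
  obtain ⟨hb0, hb1⟩ := hb
  rcases le_or_gt 0 a with ha0 | haneg
  · exact main_coupling hb0 hb1 ha0 (by rwa [abs_of_nonneg ha0] at ha)
  · -- apply the result to -a and reflect
    have ha0' : 0 ≤ -a := by linarith
    have hab' : -a ≤ b := by rwa [abs_of_neg haneg] at ha
    obtain ⟨ν', hprob', hfst', hsnd', hdiag', hband'⟩ := main_coupling hb0 hb1 ha0' hab'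
    set e : ℝ × ℝ → ℝ × ℝ := fun p => (-p.1, -p.2) with he
    have hem : Measurable e := (measurable_fst.neg).prodMk (measurable_snd.neg)
    refine ⟨ν'.map e, ?_, ?_, ?_, ?_, ?_⟩
    · exact Measure.isProbabilityMeasure_map hem.aemeasurable
    · rw [Measure.map_map measurable_fst hem]
      have h1 : (Prod.fst ∘ e) = ((fun x : ℝ => -x) ∘ Prod.fst) := rfl
      rw [h1, ← Measure.map_map (measurable_neg) measurable_fst, hfst', gauss_map_neg]
    · rw [Measure.map_map measurable_snd hem]
      have h1 : (Prod.snd ∘ e) = ((fun x : ℝ => -x) ∘ Prod.snd) := rfl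
      rw [h1, ← Measure.map_map (measurable_neg) measurable_snd, hsnd', gauss_map_neg]
    · rw [Measure.map_apply hem (meas_diag a)]
      have hset : e ⁻¹' {p : ℝ × ℝ | p.2 = p.1 + a} = {p : ℝ × ℝ | p.2 = p.1 + -a} := by
        ext p
        simp only [Set.mem_preimage, he, Set.mem_setOf_eq]
        constructor <;> intro h <;> linarith
      rw [hset]
      exact hdiag'
    · rw [Measure.map_apply hem (meas_band _)]
      have hset : e ⁻¹' {p : ℝ × ℝ | |p.2 - p.1| ≤ max (4 * b) (-2 * Real.log (b / 8))}
          = {p : ℝ × ℝ | |p.2 - p.1| ≤ max (4 * b) (-2 * Real.log (b / 8))} := by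
        ext p
        simp only [Set.mem_preimage, he, Set.mem_setOf_eq]
        rw [show -p.2 - -p.1 = -(p.2 - p.1) by ring, abs_neg]
      rw [hset]
      exact hband'
end
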